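/- Let x be a random variable taking values in a finite set X with probability mass function p_d, and let V be a finite set. An encoder is a conditional probability mass function q(z | x) on Z = V^K given x ∈ X, and a decoder is a family of conditional probability mass functions p_i(x | z_{≤i}) on X given z_{≤i} ∈ V^i, for i = 1, …, K. Define the objective L(q, {p_i}) = (1/K) Σ_{i=1}^K E_{x ~ p_d, z ~ q(·|x)}[−log p_i(x | z_{≤i})]. Suppose the pair (q, {p_i}) minimizes L over all encoder/decoder pairs, and that under the joint distribution of (x, z) induced by p_d and q, for every i ∈ {3, …, K} the coordinates z_{i−1} and z_i are conditionally independent given (x, z_{≤i−2}). Then for every i ∈ {3, …, K}, I(z_i; x | z_{≤i−1}) ≤ I(z_{i−1}; x | z_{≤i−2}). -/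

import Mathlib

open Finset

/-- A probability mass function on a finite type. -/
def IsPMF {Ω : Type*} [Fintype Ω] (μ : Ω → ℝ) : Prop :=
  (∀ ω, 0 ≤ μ ω) ∧ ∑ ω, μ ω = 1

/-- The probability that the random variable `f` takes the value `a`. -/
def pr {Ω A : Type*} [Fintype Ω] [DecidableEq A] (μ : Ω → ℝ) (f : Ω → A) (a : A) : ℝ :=
  ∑ ω, if f ω = a then μ ω else 0

/-- Mutual information `I(f; g)`; terms with zero joint probability contribute `0`. -/
noncomputable def mi {Ω A B : Type*} [Fintype Ω] [Fintype A] [Fintype B]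
    [DecidableEq A] [DecidableEq B] (μ : Ω → ℝ) (f : Ω → A) (g : Ω → B) : ℝ :=
  ∑ a : A, ∑ b : B,
    pr μ (fun ω => (f ω, g ω)) (a, b) *
      Real.log (pr μ (fun ω => (f ω, g ω)) (a, b) / (pr μ f a * pr μ g b))

/-- Conditional mutual information `I(f; g | h)`. -/
noncomputable def cmi {Ω A B C : Type*} [Fintype Ω] [Fintype A] [Fintype B] [Fintype C]
    [DecidableEq A] [DecidableEq B] [DecidableEq C]
    (μ : Ω → ℝ) (f : Ω → A) (g : Ω → B) (h : Ω → C) : ℝ :=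
  ∑ c : C, ∑ a : A, ∑ b : B,
    pr μ (fun ω => ((f ω, g ω), h ω)) ((a, b), c) *
      Real.log (pr μ (fun ω => ((f ω, g ω), h ω)) ((a, b), c) * pr μ h c /
        (pr μ (fun ω => (f ω, h ω)) (a, c) * pr μ (fun ω => (g ω, h ω)) (b, c)))

/-- `f` and `g` are conditionally independent given `h`. -/
def CondIndepRV {Ω A B C : Type*} [Fintype Ω] [DecidableEq A] [DecidableEq B] [DecidableEq C]
    (μ : Ω → ℝ) (f : Ω → A) (g : Ω → B) (h : Ω → C) : Prop :=
  ∀ a b c, 0 < pr μ h c →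
    pr μ (fun ω => ((f ω, g ω), h ω)) ((a, b), c) * pr μ h c =
      pr μ (fun ω => (f ω, h ω)) (a, c) * pr μ (fun ω => (g ω, h ω)) (b, c)

/-- Entropy `H(f)`. -/
noncomputable def ent {Ω A : Type*} [Fintype Ω] [Fintype A] [DecidableEq A]
    (μ : Ω → ℝ) (f : Ω → A) : ℝ :=
  -∑ a : A, pr μ f a * Real.log (pr μ f a)

/-- Conditional entropy `H(f | g)`. -/
noncomputable def condEnt {Ω A B : Type*} [Fintype Ω] [Fintype A] [Fintype B]
    [DecidableEq A] [DecidableEq B] (μ : Ω → ℝ) (f : Ω → A) (g : Ω → B) : ℝ :=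
  -∑ a : A, ∑ b : B,
    pr μ (fun ω => (f ω, g ω)) (a, b) *
      Real.log (pr μ (fun ω => (f ω, g ω)) (a, b) / pr μ g b)

/-- The joint pmf of `(x, z)` induced by the data pmf `pd` and the encoder `q`. -/
def joint {X Z : Type*} (pd : X → ℝ) (q : X → Z → ℝ) : X × Z → ℝ :=
  fun ω => pd ω.1 * q ω.1 ω.2

/-- The first `i` coordinates `z_{≤ i}` of a vector `z ∈ V^K`. -/
def trunc {V : Type*} {K : ℕ} (i : ℕ) (h : i ≤ K) (v : Fin K → V) : Fin i → V :=
  fun j => v (Fin.castLE h j)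

/-- `- log x` valued in the extended reals, with `- log 0 = ⊤`. -/
noncomputable def negLog (x : ℝ) : EReal := if x = 0 then ⊤ else ((-Real.log x : ℝ) : EReal)

/-- An encoder is a conditional pmf `q(z | x)`. -/
def IsEncoder {X Z : Type*} [Fintype Z] (q : X → Z → ℝ) : Prop :=
  ∀ a, (∀ v, 0 ≤ q a v) ∧ ∑ v, q a v = 1

/-- A decoder is a family of conditional pmfs `p_i(x | z_{≤ i})`, `i = 1, …, K`. -/
def IsDecoder {X V : Type*} [Fintype X] (K : ℕ) (d : (i : ℕ) → (Fin i → V) → X → ℝ) : Prop :=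
  ∀ i, 1 ≤ i → i ≤ K → ∀ zc : Fin i → V, (∀ a, 0 ≤ d i zc a) ∧ ∑ a, d i zc a = 1

/-- The objective `L(q, {p_i}) = (1/K) ∑_{i=1}^K E[- log p_i(x | z_{≤ i})]`. -/
noncomputable def objL {X V : Type*} [Fintype X] [Fintype V] (K : ℕ)
    (pd : X → ℝ) (q : X → (Fin K → V) → ℝ) (d : (i : ℕ) → (Fin i → V) → X → ℝ) : EReal :=
  ((1 / K : ℝ) : EReal) *
    ∑ i : Fin K, ∑ a : X, ∑ v : Fin K → V,
      ((pd a * q a v : ℝ) : EReal) * negLog (d (i.1 + 1) (trunc (i.1 + 1) i.isLt v) a)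

section Basic
variable {Ω A B C D : Type*} [Fintype Ω] [DecidableEq A] [DecidableEq B] [DecidableEq C]
  [DecidableEq D] (μ : Ω → ℝ)

lemma pr_nonneg (hμ : ∀ ω, 0 ≤ μ ω) (f : Ω → A) (a : A) : 0 ≤ pr μ f a :=
  Finset.sum_nonneg fun ω _ => by by_cases h : f ω = a <;> simp [pr, h, hμ ω]

lemma pr_congr {f : Ω → A} {g : Ω → B} {a : A} {b : B} (h : ∀ ω, f ω = a ↔ g ω = b) :
    pr μ f a = pr μ g b := by
  refine Finset.sum_congr rfl fun ω _ => ?_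
  by_cases hf : f ω = a
  · simp [hf, (h ω).1 hf]
  · rw [if_neg hf, if_neg (fun hg => hf ((h ω).2 hg))]

lemma pr_mono (hμ : ∀ ω, 0 ≤ μ ω) {f : Ω → A} {g : Ω → B} {a : A} {b : B}
    (h : ∀ ω, f ω = a → g ω = b) : pr μ f a ≤ pr μ g b := by
  refine Finset.sum_le_sum fun ω _ => ?_
  by_cases hf : f ω = a
  · simp [hf, h ω hf]
  · by_cases hg : g ω = b <;> simp [hf, hg, hμ ω]

lemma pr_eq_zero_of_ne {F : Ω → A} {t : A} (h : ∀ ω, F ω ≠ t) : pr μ F t = 0 :=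
  Finset.sum_eq_zero fun ω _ => by simp [h ω]

lemma single_le_pr (hμ : ∀ ω, 0 ≤ μ ω) {F : Ω → A} {t : A} (ω : Ω) (h : F ω = t) :
    μ ω ≤ pr μ F t := by
  have := Finset.single_le_sum (f := fun ω' => if F ω' = t then μ ω' else 0)
    (fun ω' _ => by by_cases h' : F ω' = t <;> simp [h', hμ ω']) (Finset.mem_univ ω)
  unfold pr
  simpa [h] using this

lemma pr_pos_elim (hμ : ∀ ω, 0 ≤ μ ω) {F : Ω → A} {t : A} (h : 0 < pr μ F t) :
    ∃ ω, 0 < μ ω ∧ F ω = t := by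
  by_contra hc
  push_neg at hc
  have : pr μ F t ≤ 0 := Finset.sum_le_sum (g := fun _ => (0:ℝ)) (fun ω _ => by
    by_cases hf : F ω = t
    · simp only [hf, if_true]
      rcases lt_or_eq_of_le (hμ ω) with h' | h'
      · exact absurd hf (fun hh => absurd h' (not_lt.2 (le_of_eq (by
          exact absurd hh (by intro hh2; exact (hc ω h' hh2).elim)))))
      · exact le_of_eq h'.symm
    · simp [hf]) |>.trans_eq (by simp)
  linarith

lemma sum_pr_fst [Fintype A] (f : Ω → A) (g : Ω → B) (b : B) :
    ∑ a, pr μ (fun ω => (f ω, g ω)) (a, b) = pr μ g b := by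
  unfold pr
  rw [Finset.sum_comm]
  refine Finset.sum_congr rfl fun ω _ => ?_
  by_cases hg : g ω = b
  · simp [Prod.ext_iff, hg, Finset.sum_ite_eq]
  · simp [Prod.ext_iff, hg]

lemma sum_pr_snd [Fintype B] (f : Ω → A) (g : Ω → B) (a : A) :
    ∑ b, pr μ (fun ω => (f ω, g ω)) (a, b) = pr μ f a := by
  unfold pr
  rw [Finset.sum_comm]
  refine Finset.sum_congr rfl fun ω _ => ?_
  by_cases hf : f ω = a
  · simp [Prod.ext_iff, hf, Finset.sum_ite_eq]
  · simp [Prod.ext_iff, hf]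

lemma expectation_pair [Fintype A] [Fintype C] (F : Ω → A) (G : Ω → C) (φ : A → C → ℝ) :
    ∑ a, ∑ c, pr μ (fun ω => (F ω, G ω)) (a, c) * φ a c = ∑ ω, μ ω * φ (F ω) (G ω) := by
  unfold pr
  simp only [Finset.sum_mul]
  rw [Finset.sum_comm]
  have step : ∀ c : C, ∑ a : A, ∑ ω, (if (F ω, G ω) = (a, c) then μ ω else 0) * φ a c
      = ∑ ω, ∑ a : A, (if (F ω, G ω) = (a, c) then μ ω else 0) * φ a c :=
    fun c => Finset.sum_comm
  simp only [step]
  rw [Finset.sum_comm]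
  refine Finset.sum_congr rfl fun ω _ => ?_
  simp only [Prod.ext_iff, ite_and]
  rw [Finset.sum_comm]
  simp [Finset.sum_ite_eq, ite_mul]

end Basic

section Ent
variable {Ω A B C D : Type*} [Fintype Ω] [Fintype A] [Fintype B] [Fintype C] [Fintype D]
  [DecidableEq A] [DecidableEq B] [DecidableEq C] [DecidableEq D] (μ : Ω → ℝ)

lemma sub_le_mul_log {p q : ℝ} (hp : 0 < p) (hq : 0 < q) : p - q ≤ p * Real.log (p / q) := by
  have h1 : Real.log (q / p) ≤ q / p - 1 := Real.log_le_sub_one_of_pos (div_pos hq hp)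
  have h2 : p * Real.log (q / p) ≤ p * (q / p - 1) := mul_le_mul_of_nonneg_left h1 hp.le
  have h3 : p * (q / p - 1) = q - p := by field_simp
  have h4 : Real.log (p / q) = -Real.log (q / p) := by
    rw [← Real.log_inv, inv_div]
  rw [h4]
  nlinarith

lemma condEnt_comp_inj (f : Ω → A) (g : Ω → B) (e : B → D) (he : Function.Injective e) :
    condEnt μ f (fun ω => e (g ω)) = condEnt μ f g := by
  unfold condEnt
  congr 1
  refine Finset.sum_congr rfl fun a _ => ?_
  have hvanish : ∀ d : D, d ∉ Finset.image e Finset.univ →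
      pr μ (fun ω => (f ω, e (g ω))) (a, d) *
        Real.log (pr μ (fun ω => (f ω, e (g ω))) (a, d) / pr μ (fun ω => e (g ω)) d) = 0 := by
    intro d hd
    have : pr μ (fun ω => (f ω, e (g ω))) (a, d) = 0 := by
      refine pr_eq_zero_of_ne μ fun ω hω => hd ?_
      rw [Prod.ext_iff] at hω
      exact Finset.mem_image.2 ⟨g ω, Finset.mem_univ _, hω.2⟩
    rw [this]; ring
  rw [← Finset.sum_subset (Finset.subset_univ (Finset.image e Finset.univ))
    (fun d _ hd => hvanish d hd),
    Finset.sum_image (fun x _ y _ hxy => he hxy)]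
  refine Finset.sum_congr rfl fun b _ => ?_
  have h1 : pr μ (fun ω => (f ω, e (g ω))) (a, e b) = pr μ (fun ω => (f ω, g ω)) (a, b) :=
    pr_congr μ fun ω => by simp [Prod.ext_iff, he.eq_iff]
  have h2 : pr μ (fun ω => e (g ω)) (e b) = pr μ g b := pr_congr μ fun ω => by simp [he.eq_iff]
  rw [h1, h2]

lemma sum_pr_mid (f : Ω → A) (g : Ω → B) (h : Ω → C) (a : A) (c : C) :
    ∑ b, pr μ (fun ω => ((f ω, g ω), h ω)) ((a, b), c) = pr μ (fun ω => (f ω, h ω)) (a, c) := by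
  have h1 : ∀ b, pr μ (fun ω => ((f ω, g ω), h ω)) ((a, b), c)
      = pr μ (fun ω => (g ω, (f ω, h ω))) (b, (a, c)) := fun b =>
    pr_congr μ fun ω => by simp [Prod.ext_iff]; tauto
  simp only [h1]
  exact sum_pr_fst μ g (fun ω => (f ω, h ω)) (a, c)

lemma cmi_comm (f : Ω → A) (g : Ω → B) (h : Ω → C) : cmi μ f g h = cmi μ g f h := by
  unfold cmi
  refine Finset.sum_congr rfl fun c _ => ?_
  rw [Finset.sum_comm]
  refine Finset.sum_congr rfl fun b _ => Finset.sum_congr rfl fun a _ => ?_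
  have h1 : pr μ (fun ω => ((f ω, g ω), h ω)) ((a, b), c)
      = pr μ (fun ω => ((g ω, f ω), h ω)) ((b, a), c) :=
    pr_congr μ fun ω => by simp [Prod.ext_iff]; tauto
  rw [h1, mul_comm (pr μ (fun ω => (f ω, h ω)) (a, c))]

lemma cmi_eq (hμ : ∀ ω, 0 ≤ μ ω) (f : Ω → A) (g : Ω → B) (h : Ω → C) :
    cmi μ f g h = condEnt μ f h - condEnt μ f (fun ω => (g ω, h ω)) := by
  have key : ∀ a b c,
      pr μ (fun ω => ((f ω, g ω), h ω)) ((a, b), c) *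
        Real.log (pr μ (fun ω => ((f ω, g ω), h ω)) ((a, b), c) * pr μ h c /
          (pr μ (fun ω => (f ω, h ω)) (a, c) * pr μ (fun ω => (g ω, h ω)) (b, c)))
      = pr μ (fun ω => ((f ω, g ω), h ω)) ((a, b), c) *
          Real.log (pr μ (fun ω => ((f ω, g ω), h ω)) ((a, b), c) /
            pr μ (fun ω => (g ω, h ω)) (b, c))
        - pr μ (fun ω => ((f ω, g ω), h ω)) ((a, b), c) *
          Real.log (pr μ (fun ω => (f ω, h ω)) (a, c) / pr μ h c) := by
    intro a b c
    set p3 := pr μ (fun ω => ((f ω, g ω), h ω)) ((a, b), c) with hp3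
    by_cases h0 : p3 = 0
    · simp [h0]
    · have hp3pos : 0 < p3 := lt_of_le_of_ne (pr_nonneg μ hμ _ _) (Ne.symm h0)
      have hFH : p3 ≤ pr μ (fun ω => (f ω, h ω)) (a, c) :=
        pr_mono μ hμ fun ω hω => by simp [Prod.ext_iff] at hω ⊢; tauto
      have hGH : p3 ≤ pr μ (fun ω => (g ω, h ω)) (b, c) :=
        pr_mono μ hμ fun ω hω => by simp [Prod.ext_iff] at hω ⊢; tauto
      have hH : p3 ≤ pr μ h c :=
        pr_mono μ hμ fun ω hω => by simp [Prod.ext_iff] at hω ⊢; tauto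
      have h1 : 0 < pr μ (fun ω => (f ω, h ω)) (a, c) := lt_of_lt_of_le hp3pos hFH
      have h2 : 0 < pr μ (fun ω => (g ω, h ω)) (b, c) := lt_of_lt_of_le hp3pos hGH
      have h3 : 0 < pr μ h c := lt_of_lt_of_le hp3pos hH
      rw [Real.log_div (by positivity) (by positivity),
        Real.log_div h0 h2.ne', Real.log_div h1.ne' h3.ne',
        Real.log_mul h0 h3.ne', Real.log_mul h1.ne' h2.ne']
      ring
  unfold cmi
  rw [Finset.sum_comm]
  have inner : ∀ a : A, ∑ c : C, ∑ b : B,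
      pr μ (fun ω => ((f ω, g ω), h ω)) ((a, b), c) *
        Real.log (pr μ (fun ω => ((f ω, g ω), h ω)) ((a, b), c) * pr μ h c /
          (pr μ (fun ω => (f ω, h ω)) (a, c) * pr μ (fun ω => (g ω, h ω)) (b, c)))
      = (∑ c : C, ∑ b : B,
          pr μ (fun ω => ((f ω, g ω), h ω)) ((a, b), c) *
            Real.log (pr μ (fun ω => ((f ω, g ω), h ω)) ((a, b), c) /
              pr μ (fun ω => (g ω, h ω)) (b, c)))
        - ∑ c : C, pr μ (fun ω => (f ω, h ω)) (a, c) *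
            Real.log (pr μ (fun ω => (f ω, h ω)) (a, c) / pr μ h c) := by
    intro a
    simp only [key]
    simp only [Finset.sum_sub_distrib]
    congr 1
    refine Finset.sum_congr rfl fun c _ => ?_
    rw [← Finset.sum_mul, sum_pr_mid]
  simp only [inner]
  rw [Finset.sum_sub_distrib]
  unfold condEnt
  have reindex : ∀ a : A, ∑ bc : B × C,
      pr μ (fun ω => (f ω, (g ω, h ω))) (a, bc) *
        Real.log (pr μ (fun ω => (f ω, (g ω, h ω))) (a, bc) / pr μ (fun ω => (g ω, h ω)) bc)
      = ∑ c : C, ∑ b : B,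
          pr μ (fun ω => ((f ω, g ω), h ω)) ((a, b), c) *
            Real.log (pr μ (fun ω => ((f ω, g ω), h ω)) ((a, b), c) /
              pr μ (fun ω => (g ω, h ω)) (b, c)) := by
    intro a
    rw [Fintype.sum_prod_type]
    rw [Finset.sum_comm]
    refine Finset.sum_congr rfl fun c _ => Finset.sum_congr rfl fun b _ => ?_
    have h1 : pr μ (fun ω => (f ω, (g ω, h ω))) (a, (b, c))
        = pr μ (fun ω => ((f ω, g ω), h ω)) ((a, b), c) :=
      pr_congr μ fun ω => by simp [Prod.ext_iff]; tauto
    rw [h1]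
  simp only [reindex]
  ring

lemma cmi_nonneg (hμ : ∀ ω, 0 ≤ μ ω) (f : Ω → A) (g : Ω → B) (h : Ω → C) :
    0 ≤ cmi μ f g h := by
  unfold cmi
  refine Finset.sum_nonneg fun c _ => ?_
  by_cases hc : pr μ h c = 0
  · refine le_of_eq (Finset.sum_eq_zero fun a _ => Finset.sum_eq_zero fun b _ => ?_).symm
    have h0 : pr μ (fun ω => ((f ω, g ω), h ω)) ((a, b), c) = 0 := by
      have hle : pr μ (fun ω => ((f ω, g ω), h ω)) ((a, b), c) ≤ pr μ h c :=
        pr_mono μ hμ fun ω hω => by simp [Prod.ext_iff] at hω ⊢; tauto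
      have hge := pr_nonneg μ hμ (fun ω => ((f ω, g ω), h ω)) ((a, b), c)
      linarith
    simp [h0]
  · have hcpos : 0 < pr μ h c := lt_of_le_of_ne (pr_nonneg μ hμ _ _) (Ne.symm hc)
    have bound : ∀ a b,
        pr μ (fun ω => ((f ω, g ω), h ω)) ((a, b), c)
          - pr μ (fun ω => (f ω, h ω)) (a, c) * pr μ (fun ω => (g ω, h ω)) (b, c) / pr μ h c ≤
        pr μ (fun ω => ((f ω, g ω), h ω)) ((a, b), c) *
          Real.log (pr μ (fun ω => ((f ω, g ω), h ω)) ((a, b), c) * pr μ h c /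
            (pr μ (fun ω => (f ω, h ω)) (a, c) * pr μ (fun ω => (g ω, h ω)) (b, c))) := by
      intro a b
      set p3 := pr μ (fun ω => ((f ω, g ω), h ω)) ((a, b), c) with hp3
      by_cases h0 : p3 = 0
      · rw [h0]
        simp only [zero_mul, zero_sub, neg_nonpos]
        have n1 := pr_nonneg μ hμ (fun ω => (f ω, h ω)) (a, c)
        have n2 := pr_nonneg μ hμ (fun ω => (g ω, h ω)) (b, c)
        exact div_nonneg (mul_nonneg n1 n2) hcpos.le
      · have hp3pos : 0 < p3 := lt_of_le_of_ne (pr_nonneg μ hμ _ _) (Ne.symm h0)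
        have hFH : 0 < pr μ (fun ω => (f ω, h ω)) (a, c) :=
          lt_of_lt_of_le hp3pos (pr_mono μ hμ fun ω hω => by
            simp [Prod.ext_iff] at hω ⊢; tauto)
        have hGH : 0 < pr μ (fun ω => (g ω, h ω)) (b, c) :=
          lt_of_lt_of_le hp3pos (pr_mono μ hμ fun ω hω => by
            simp [Prod.ext_iff] at hω ⊢; tauto)
        have hq : 0 < pr μ (fun ω => (f ω, h ω)) (a, c) * pr μ (fun ω => (g ω, h ω)) (b, c)
            / pr μ h c := by positivity
        have harg : p3 * pr μ h c /
            (pr μ (fun ω => (f ω, h ω)) (a, c) * pr μ (fun ω => (g ω, h ω)) (b, c))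
            = p3 / (pr μ (fun ω => (f ω, h ω)) (a, c) * pr μ (fun ω => (g ω, h ω)) (b, c)
              / pr μ h c) := by
          field_simp
        rw [harg]
        exact sub_le_mul_log hp3pos hq
    calc (0:ℝ) = (∑ a, ∑ b, pr μ (fun ω => ((f ω, g ω), h ω)) ((a, b), c))
          - (∑ a, pr μ (fun ω => (f ω, h ω)) (a, c)) *
            (∑ b, pr μ (fun ω => (g ω, h ω)) (b, c)) / pr μ h c := by
          have e1 : ∀ a, ∑ b, pr μ (fun ω => ((f ω, g ω), h ω)) ((a, b), c)
              = pr μ (fun ω => (f ω, h ω)) (a, c) := fun a => sum_pr_mid μ f g h a c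
          simp only [e1]
          rw [sum_pr_fst μ f h c, sum_pr_fst μ g h c]
          field_simp
          ring
      _ = ∑ a, ∑ b, (pr μ (fun ω => ((f ω, g ω), h ω)) ((a, b), c)
          - pr μ (fun ω => (f ω, h ω)) (a, c) * pr μ (fun ω => (g ω, h ω)) (b, c)
            / pr μ h c) := by
          simp only [Finset.sum_sub_distrib]
          congr 1
          rw [Finset.sum_mul, Finset.sum_div]
          refine Finset.sum_congr rfl fun a _ => ?_
          rw [Finset.mul_sum, Finset.sum_div]
      _ ≤ _ := Finset.sum_le_sum fun a _ => Finset.sum_le_sum fun b _ => bound a b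

lemma cmi_eq_zero_of_condIndep (hμ : ∀ ω, 0 ≤ μ ω) (f : Ω → A) (g : Ω → B) (h : Ω → C)
    (hci : CondIndepRV μ f g h) : cmi μ f g h = 0 := by
  unfold cmi
  refine Finset.sum_eq_zero fun c _ => Finset.sum_eq_zero fun a _ => Finset.sum_eq_zero fun b _ => ?_
  set p3 := pr μ (fun ω => ((f ω, g ω), h ω)) ((a, b), c) with hp3
  by_cases h0 : p3 = 0
  · simp [h0]
  · have hp3pos : 0 < p3 := lt_of_le_of_ne (pr_nonneg μ hμ _ _) (Ne.symm h0)
    have hH : 0 < pr μ h c := lt_of_lt_of_le hp3pos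
      (pr_mono μ hμ fun ω hω => by simp [Prod.ext_iff] at hω ⊢; tauto)
    have heq := hci a b c hH
    rw [← hp3] at heq
    have harg : p3 * pr μ h c /
        (pr μ (fun ω => (f ω, h ω)) (a, c) * pr μ (fun ω => (g ω, h ω)) (b, c)) = 1 := by
      rw [← heq]
      field_simp
    rw [harg, Real.log_one, mul_zero]

/-- Gibbs' inequality: the conditional entropy lower-bounds the cross entropy. -/
lemma gibbs (hμ : ∀ ω, 0 ≤ μ ω) (f : Ω → A) (h : Ω → C) (δ : C → A → ℝ)
    (hδ0 : ∀ c a, 0 ≤ δ c a) (hδ1 : ∀ c, ∑ a, δ c a = 1)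
    (hpos : ∀ a c, 0 < pr μ (fun ω => (f ω, h ω)) (a, c) → 0 < δ c a) :
    condEnt μ f h ≤ ∑ a, ∑ c, pr μ (fun ω => (f ω, h ω)) (a, c) * (-Real.log (δ c a)) := by
  have bound : ∀ a c, pr μ (fun ω => (f ω, h ω)) (a, c) - pr μ h c * δ c a ≤
      pr μ (fun ω => (f ω, h ω)) (a, c) * (-Real.log (δ c a)) +
      pr μ (fun ω => (f ω, h ω)) (a, c) *
        Real.log (pr μ (fun ω => (f ω, h ω)) (a, c) / pr μ h c) := by
    intro a c
    set p := pr μ (fun ω => (f ω, h ω)) (a, c) with hp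
    have hpc0 : 0 ≤ pr μ h c := pr_nonneg μ hμ h c
    by_cases h0 : p = 0
    · rw [h0]
      simp only [zero_mul, add_zero, zero_sub, zero_add]
      linarith [mul_nonneg hpc0 (hδ0 c a)]
    · have hppos : 0 < p := lt_of_le_of_ne (pr_nonneg μ hμ _ _) (Ne.symm h0)
      have hpc : 0 < pr μ h c := lt_of_lt_of_le hppos
        (pr_mono μ hμ fun ω hω => by simp [Prod.ext_iff] at hω ⊢; tauto)
      have hδpos : 0 < δ c a := hpos a c hppos
      have key := sub_le_mul_log hppos (mul_pos hpc hδpos)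
      have harg : Real.log (p / (pr μ h c * δ c a))
          = -Real.log (δ c a) + Real.log (p / pr μ h c) := by
        rw [Real.log_div h0 (by positivity), Real.log_mul hpc.ne' hδpos.ne',
          Real.log_div h0 hpc.ne']
        ring
      rw [harg, mul_add] at key
      linarith
  have total : (∑ a, ∑ c, (pr μ (fun ω => (f ω, h ω)) (a, c) - pr μ h c * δ c a)) = 0 := by
    have s1 : (∑ a, ∑ c, pr μ (fun ω => (f ω, h ω)) (a, c)) = ∑ c, pr μ h c := by
      rw [Finset.sum_comm]
      exact Finset.sum_congr rfl fun c _ => sum_pr_fst μ f h c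
    have s2 : (∑ a : A, ∑ c, pr μ h c * δ c a) = ∑ c, pr μ h c := by
      rw [Finset.sum_comm]
      refine Finset.sum_congr rfl fun c _ => ?_
      rw [← Finset.mul_sum, hδ1 c, mul_one]
    simp only [Finset.sum_sub_distrib, s1, s2, sub_self]
  have main : (∑ a, ∑ c, (pr μ (fun ω => (f ω, h ω)) (a, c) - pr μ h c * δ c a)) ≤
      ∑ a, ∑ c, (pr μ (fun ω => (f ω, h ω)) (a, c) * (-Real.log (δ c a)) +
        pr μ (fun ω => (f ω, h ω)) (a, c) *
          Real.log (pr μ (fun ω => (f ω, h ω)) (a, c) / pr μ h c)) :=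
    Finset.sum_le_sum fun a _ => Finset.sum_le_sum fun c _ => bound a c
  rw [total] at main
  simp only [Finset.sum_add_distrib] at main
  unfold condEnt
  linarith

/-- The Bayes (posterior) decoder. -/
noncomputable def bayesDec {Ω A C : Type*} [Fintype Ω] [Fintype A] [DecidableEq A]
    [DecidableEq C] (μ : Ω → ℝ) (f : Ω → A) (h : Ω → C) : C → A → ℝ := fun c a =>
  if pr μ h c = 0 then (Fintype.card A : ℝ)⁻¹
  else pr μ (fun ω => (f ω, h ω)) (a, c) / pr μ h c

lemma bayesDec_nonneg (hμ : ∀ ω, 0 ≤ μ ω) (f : Ω → A) (h : Ω → C) (c : C) (a : A) :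
    0 ≤ bayesDec μ f h c a := by
  unfold bayesDec
  split
  · positivity
  · exact div_nonneg (pr_nonneg μ hμ _ _) (pr_nonneg μ hμ _ _)

lemma bayesDec_sum [Nonempty A] (hμ : ∀ ω, 0 ≤ μ ω) (f : Ω → A) (h : Ω → C) (c : C) :
    ∑ a, bayesDec μ f h c a = 1 := by
  unfold bayesDec
  by_cases hc : pr μ h c = 0
  · simp only [hc, if_true]
    rw [Finset.sum_const, Finset.card_univ, nsmul_eq_mul]
    rw [mul_inv_cancel₀]
    exact_mod_cast Fintype.card_ne_zero
  · simp only [hc, if_false]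
    rw [← Finset.sum_div, sum_pr_fst μ f h c, div_self hc]

lemma bayesDec_pos (hμ : ∀ ω, 0 ≤ μ ω) (f : Ω → A) (h : Ω → C) (a : A) (c : C)
    (hp : 0 < pr μ (fun ω => (f ω, h ω)) (a, c)) : 0 < bayesDec μ f h c a := by
  have hpc : 0 < pr μ h c := lt_of_lt_of_le hp
    (pr_mono μ hμ fun ω hω => by simp [Prod.ext_iff] at hω ⊢; tauto)
  unfold bayesDec
  rw [if_neg hpc.ne']
  positivity

lemma condEnt_eq_bayes (hμ : ∀ ω, 0 ≤ μ ω) (f : Ω → A) (h : Ω → C) :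
    ∑ a, ∑ c, pr μ (fun ω => (f ω, h ω)) (a, c) * (-Real.log (bayesDec μ f h c a))
      = condEnt μ f h := by
  unfold condEnt
  rw [← Finset.sum_neg_distrib]
  refine Finset.sum_congr rfl fun a _ => ?_
  rw [← Finset.sum_neg_distrib]
  refine Finset.sum_congr rfl fun c _ => ?_
  set p := pr μ (fun ω => (f ω, h ω)) (a, c) with hp
  by_cases h0 : p = 0
  · simp [h0]
  · have hppos : 0 < p := lt_of_le_of_ne (pr_nonneg μ hμ _ _) (Ne.symm h0)
    have hpc : 0 < pr μ h c := lt_of_lt_of_le hppos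
      (pr_mono μ hμ fun ω hω => by simp [Prod.ext_iff] at hω ⊢; tauto)
    unfold bayesDec
    rw [if_neg hpc.ne', ← hp]
    ring

end Ent

/-! ### EReal helpers -/

lemma coe_sum {ι : Type*} (s : Finset ι) (f : ι → ℝ) :
    ((∑ i ∈ s, f i : ℝ) : EReal) = ∑ i ∈ s, ((f i : ℝ) : EReal) :=
  map_sum (⟨⟨Real.toEReal, EReal.coe_zero⟩, EReal.coe_add⟩ : ℝ →+ EReal) f s

lemma negLog_nonneg {t : ℝ} (h0 : 0 ≤ t) (h1 : t ≤ 1) : 0 ≤ negLog t := by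
  unfold negLog
  split
  · exact le_top
  · rw [← EReal.coe_zero, EReal.coe_le_coe_iff]
    simp only [neg_nonneg]
    exact Real.log_nonpos h0 h1

lemma negLog_coe {t : ℝ} (h : t ≠ 0) : negLog t = ((-Real.log t : ℝ) : EReal) := if_neg h

lemma ereal_term {w t : ℝ} (hw : 0 ≤ w) (h : w ≠ 0 → t ≠ 0) :
    ((w : ℝ) : EReal) * negLog t = ((w * (-Real.log t) : ℝ) : EReal) := by
  by_cases hw0 : w = 0
  · subst hw0; simp
  · rw [negLog_coe (h hw0), ← EReal.coe_mul]

section Inner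
variable {X V : Type*} [Fintype X] [Fintype V] [DecidableEq X] [DecidableEq V] {K : ℕ}

lemma inner_ge_condEnt [Nonempty X] (μ : X × (Fin K → V) → ℝ) (hμ : ∀ ω, 0 ≤ μ ω)
    (ℓ : ℕ) (hℓ : ℓ ≤ K) (dec : (Fin ℓ → V) → X → ℝ)
    (hdec : ∀ zc : Fin ℓ → V, (∀ a, 0 ≤ dec zc a) ∧ ∑ a, dec zc a = 1) :
    ((condEnt μ Prod.fst (fun ω => trunc ℓ hℓ ω.2) : ℝ) : EReal)
      ≤ ∑ a : X, ∑ v : Fin K → V, ((μ (a, v) : ℝ) : EReal) * negLog (dec (trunc ℓ hℓ v) a) := by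
  have hdle1 : ∀ zc a, dec zc a ≤ 1 := by
    intro zc a
    calc dec zc a ≤ ∑ a', dec zc a' :=
          Finset.single_le_sum (fun a' _ => (hdec zc).1 a') (Finset.mem_univ a)
      _ = 1 := (hdec zc).2
  by_cases hcase : ∀ a v, 0 < μ (a, v) → dec (trunc ℓ hℓ v) a ≠ 0
  · have hterm : ∀ a v, ((μ (a, v) : ℝ) : EReal) * negLog (dec (trunc ℓ hℓ v) a)
        = ((μ (a, v) * (-Real.log (dec (trunc ℓ hℓ v) a)) : ℝ) : EReal) := fun a v =>
      ereal_term (hμ _) (fun hne => hcase a v (lt_of_le_of_ne (hμ _) (Ne.symm hne)))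
    simp only [hterm]
    have hcoe : ∀ a : X, ∑ v : Fin K → V,
        ((μ (a, v) * (-Real.log (dec (trunc ℓ hℓ v) a)) : ℝ) : EReal)
        = ((∑ v : Fin K → V, μ (a, v) * (-Real.log (dec (trunc ℓ hℓ v) a)) : ℝ) : EReal) :=
      fun a => (coe_sum _ _).symm
    simp only [hcoe]
    rw [← coe_sum, EReal.coe_le_coe_iff]
    have hre : ∑ a : X, ∑ v : Fin K → V, μ (a, v) * (-Real.log (dec (trunc ℓ hℓ v) a))
        = ∑ a : X, ∑ zc : Fin ℓ → V,
            pr μ (fun ω => (ω.1, trunc ℓ hℓ ω.2)) (a, zc) * (-Real.log (dec zc a)) := by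
      rw [expectation_pair μ Prod.fst (fun ω => trunc ℓ hℓ ω.2) (fun a zc => -Real.log (dec zc a))]
      exact (Fintype.sum_prod_type
        (f := fun p : X × (Fin K → V) => μ p * -Real.log (dec (trunc ℓ hℓ p.2) p.1))).symm
    rw [hre]
    exact gibbs μ hμ Prod.fst (fun ω => trunc ℓ hℓ ω.2) (fun zc a => dec zc a)
      (fun zc a => (hdec zc).1 a) (fun zc => (hdec zc).2)
      (fun a zc hp => by
        obtain ⟨ω, hω, hfω⟩ := pr_pos_elim μ hμ hp
        have h1 : ω.1 = a := congrArg Prod.fst hfω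
        have h2 : trunc ℓ hℓ ω.2 = zc := congrArg Prod.snd hfω
        have hne : dec (trunc ℓ hℓ ω.2) ω.1 ≠ 0 := hcase ω.1 ω.2 hω
        rw [h1, h2] at hne
        exact lt_of_le_of_ne ((hdec zc).1 a) (Ne.symm hne))
  · push_neg at hcase
    obtain ⟨a, v, hpos, hzero⟩ := hcase
    have htop : ((μ (a, v) : ℝ) : EReal) * negLog (dec (trunc ℓ hℓ v) a) = ⊤ := by
      rw [hzero]
      show ((μ (a, v) : ℝ) : EReal) * negLog 0 = ⊤
      rw [show negLog 0 = ⊤ from if_pos rfl]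
      exact EReal.coe_mul_top_of_pos hpos
    have hnn : ∀ (a' : X) (v' : Fin K → V),
        (0 : EReal) ≤ ((μ (a', v') : ℝ) : EReal) * negLog (dec (trunc ℓ hℓ v') a') := by
      intro a' v'
      refine mul_nonneg ?_ (negLog_nonneg ((hdec _).1 _) (hdle1 _ _))
      exact_mod_cast hμ (a', v')
    have hsum : (⊤ : EReal) ≤ ∑ a' : X, ∑ v' : Fin K → V,
        ((μ (a', v') : ℝ) : EReal) * negLog (dec (trunc ℓ hℓ v') a') := by
      rw [← htop]
      calc ((μ (a, v) : ℝ) : EReal) * negLog (dec (trunc ℓ hℓ v) a)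
          ≤ ∑ v' : Fin K → V, ((μ (a, v') : ℝ) : EReal) * negLog (dec (trunc ℓ hℓ v') a) :=
            Finset.single_le_sum (fun v' _ => hnn a v') (Finset.mem_univ v)
        _ ≤ _ := Finset.single_le_sum
            (f := fun a' => ∑ v' : Fin K → V,
              ((μ (a', v') : ℝ) : EReal) * negLog (dec (trunc ℓ hℓ v') a'))
            (fun a' _ => Finset.sum_nonneg fun v' _ => hnn a' v') (Finset.mem_univ a)
    rw [top_le_iff.1 hsum]
    exact le_top

lemma inner_eq_bayes [Nonempty X] (μ : X × (Fin K → V) → ℝ) (hμ : ∀ ω, 0 ≤ μ ω)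
    (ℓ : ℕ) (hℓ : ℓ ≤ K) :
    ∑ a : X, ∑ v : Fin K → V, ((μ (a, v) : ℝ) : EReal) *
        negLog (bayesDec μ Prod.fst (fun ω => trunc ℓ hℓ ω.2) (trunc ℓ hℓ v) a)
      = ((condEnt μ Prod.fst (fun ω => trunc ℓ hℓ ω.2) : ℝ) : EReal) := by
  set dec := bayesDec μ Prod.fst (fun ω => trunc ℓ hℓ ω.2) with hdec
  have hterm : ∀ a v, ((μ (a, v) : ℝ) : EReal) * negLog (dec (trunc ℓ hℓ v) a)
      = ((μ (a, v) * (-Real.log (dec (trunc ℓ hℓ v) a)) : ℝ) : EReal) := by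
    intro a v
    refine ereal_term (hμ _) (fun hne => ?_)
    have hp : 0 < μ (a, v) := lt_of_le_of_ne (hμ _) (Ne.symm hne)
    have hpr : 0 < pr μ (fun ω => (ω.1, trunc ℓ hℓ ω.2)) (a, trunc ℓ hℓ v) :=
      lt_of_lt_of_le hp (single_le_pr μ hμ (a, v) rfl)
    exact (bayesDec_pos μ hμ Prod.fst (fun ω => trunc ℓ hℓ ω.2) a (trunc ℓ hℓ v) hpr).ne'
  simp only [hterm]
  have hcoe : ∀ a : X, ∑ v : Fin K → V,
      ((μ (a, v) * (-Real.log (dec (trunc ℓ hℓ v) a)) : ℝ) : EReal)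
      = ((∑ v : Fin K → V, μ (a, v) * (-Real.log (dec (trunc ℓ hℓ v) a)) : ℝ) : EReal) :=
    fun a => (coe_sum _ _).symm
  simp only [hcoe]
  rw [← coe_sum, EReal.coe_eq_coe_iff]
  rw [show ∑ a : X, ∑ v : Fin K → V, μ (a, v) * (-Real.log (dec (trunc ℓ hℓ v) a))
      = ∑ a : X, ∑ zc : Fin ℓ → V,
          pr μ (fun ω => (ω.1, trunc ℓ hℓ ω.2)) (a, zc) * (-Real.log (dec zc a)) from by
    rw [expectation_pair μ Prod.fst (fun ω => trunc ℓ hℓ ω.2) (fun a zc => -Real.log (dec zc a))]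
    exact (Fintype.sum_prod_type
        (f := fun p : X × (Fin K → V) => μ p * -Real.log (dec (trunc ℓ hℓ p.2) p.1))).symm]
  exact condEnt_eq_bayes μ hμ Prod.fst (fun ω => trunc ℓ hℓ ω.2)

end Inner

section MoreAux
variable {Ω A B C D : Type*} [Fintype Ω] [Fintype A] [Fintype B] [Fintype C] [Fintype D]
  [DecidableEq A] [DecidableEq B] [DecidableEq C] [DecidableEq D] (μ : Ω → ℝ)

lemma cmi_eq' (hμ : ∀ ω, 0 ≤ μ ω) (f : Ω → A) (g : Ω → B) (h : Ω → C) :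
    cmi μ f g h = condEnt μ g h - condEnt μ g (fun ω => (f ω, h ω)) := by
  rw [cmi_comm, cmi_eq μ hμ]

lemma cmi_comp_inj (hμ : ∀ ω, 0 ≤ μ ω) (f : Ω → A) (g : Ω → B) (h : Ω → C)
    (e : C → D) (he : Function.Injective e) :
    cmi μ f g (fun ω => e (h ω)) = cmi μ f g h := by
  rw [cmi_eq μ hμ f g (fun ω => e (h ω)), cmi_eq μ hμ f g h, condEnt_comp_inj μ f h e he]
  congr 1
  exact condEnt_comp_inj μ f (fun ω => (g ω, h ω)) (fun p => (p.1, e p.2))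
    (fun p p' hp => by
      rw [Prod.ext_iff] at hp ⊢
      exact ⟨hp.1, he hp.2⟩)

lemma pr_equiv (ν : Ω → ℝ) (Φ : Equiv.Perm Ω) (F : Ω → A) (t : A) :
    pr (fun ω => ν (Φ ω)) F t = pr ν (fun ω => F (Φ.symm ω)) t := by
  unfold pr
  calc ∑ ω, (if F ω = t then ν (Φ ω) else 0)
      = ∑ ω, (if F (Φ.symm (Φ ω)) = t then ν (Φ ω) else 0) := by
        simp only [Equiv.symm_apply_apply]
    _ = ∑ ω, (if F (Φ.symm ω) = t then ν ω else 0) :=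
        Equiv.sum_comp Φ (fun ω => if F (Φ.symm ω) = t then ν ω else 0)

lemma condEnt_equiv (ν : Ω → ℝ) (Φ : Equiv.Perm Ω) (f : Ω → A) (h : Ω → B) :
    condEnt (fun ω => ν (Φ ω)) f h
      = condEnt ν (fun ω => f (Φ.symm ω)) (fun ω => h (Φ.symm ω)) := by
  unfold condEnt
  congr 1
  refine Finset.sum_congr rfl fun a _ => Finset.sum_congr rfl fun b _ => ?_
  rw [pr_equiv ν Φ (fun ω => (f ω, h ω)) (a, b), pr_equiv ν Φ h b]

end MoreAux

def snoc2 {V : Type*} (m n : ℕ) (_ : m < n) : V × (Fin m → V) → (Fin n → V) :=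
  fun p j => if hj : j.1 < m then p.2 ⟨j.1, hj⟩ else p.1

lemma snoc2_inj {V : Type*} (m n : ℕ) (h : m < n) :
    Function.Injective (snoc2 (V := V) m n h) := by
  intro p p' hpp
  have hy : p.1 = p'.1 := by
    have h2 := congrFun hpp ⟨m, h⟩
    simpa [snoc2] using h2
  have hw : p.2 = p'.2 := by
    funext t
    have h2 := congrFun hpp ⟨t.1, lt_trans t.2 h⟩
    simpa [snoc2, dif_pos t.2] using h2
  exact Prod.ext hy hw

def compEquiv {V : Type*} {K : ℕ} (σ : Equiv.Perm (Fin K)) : (Fin K → V) ≃ (Fin K → V) where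
  toFun v := fun j => v (σ j)
  invFun v := fun j => v (σ.symm j)
  left_inv v := funext fun j => by simp
  right_inv v := funext fun j => by simp


/-- If the encoder/decoder pair `(q, d)` minimizes the objective `L` over all
encoder/decoder pairs, and under the induced joint law `z_{i-1} ⊥ z_i ∣ (x, z_{≤ i-2})` for all
`i ∈ {3, …, K}`, then `I(z_i; x ∣ z_{≤ i-1}) ≤ I(z_{i-1}; x ∣ z_{≤ i-2})` for all such `i`. -/
theorem optimal_ordered_autoencoder_decreasing_information
    {X V : Type*} [Fintype X] [Fintype V] [DecidableEq X] [DecidableEq V]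
    (K : ℕ) (pd : X → ℝ) (hpd : IsPMF pd)
    (q : X → (Fin K → V) → ℝ) (hq : IsEncoder q)
    (d : (i : ℕ) → (Fin i → V) → X → ℝ) (hd : IsDecoder K d)
    (hopt : ∀ (q' : X → (Fin K → V) → ℝ), IsEncoder q' →
      ∀ (d' : (i : ℕ) → (Fin i → V) → X → ℝ), IsDecoder K d' →
        objL K pd q d ≤ objL K pd q' d')
    (hci : ∀ (i : ℕ) (h3 : 3 ≤ i) (hiK : i ≤ K),
      CondIndepRV (joint pd q)
        (fun ω => ω.2 (⟨i - 2, by omega⟩ : Fin K))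
        (fun ω => ω.2 (⟨i - 1, by omega⟩ : Fin K))
        (fun ω => (ω.1, trunc (i - 2) (by omega) ω.2))) :
    ∀ (i : ℕ) (h3 : 3 ≤ i) (hiK : i ≤ K),
      cmi (joint pd q) (fun ω => ω.2 (⟨i - 1, by omega⟩ : Fin K)) Prod.fst
          (fun ω => trunc (i - 1) (by omega) ω.2) ≤
        cmi (joint pd q) (fun ω => ω.2 (⟨i - 2, by omega⟩ : Fin K)) Prod.fst
          (fun ω => trunc (i - 2) (by omega) ω.2) := by
  intro i h3 hiK
  classical
  have hK3 : 3 ≤ K := le_trans h3 hiK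
  have hi2K : i - 2 < K := by omega
  have hi1K : i - 1 < K := by omega
  have h2le : i - 2 ≤ K := by omega
  have h1le : i - 1 ≤ K := by omega
  set μ : X × (Fin K → V) → ℝ := joint pd q with hμdef
  have hμ : ∀ ω, 0 ≤ μ ω := fun ω => mul_nonneg (hpd.1 ω.1) ((hq ω.1).1 ω.2)
  haveI hXne : Nonempty X := by
    by_contra hne
    rw [not_nonempty_iff] at hne
    have h1 := hpd.2
    rw [Finset.univ_eq_empty, Finset.sum_empty] at h1
    norm_num at h1
  have hEAEB : condEnt μ Prod.fst
        (fun ω => (ω.2 ⟨i - 2, hi2K⟩, trunc (i - 2) h2le ω.2))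
      ≤ condEnt μ Prod.fst (fun ω => (ω.2 ⟨i - 1, hi1K⟩, trunc (i - 2) h2le ω.2)) := by
    -- Step B: optimality of (q, d) against the coordinate-swapped encoder.
    set σ : Equiv.Perm (Fin K) := Equiv.swap ⟨i - 2, hi2K⟩ ⟨i - 1, hi1K⟩ with hσ
    have hσsymm : σ.symm = σ := by rw [hσ]; exact Equiv.symm_swap _ _
    set q' : X → (Fin K → V) → ℝ := fun a v => q a (fun j => v (σ j)) with hq'def
    have hq' : IsEncoder q' := fun a => ⟨fun v => (hq a).1 _, by
      rw [← (hq a).2]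
      exact Equiv.sum_comp (compEquiv σ) (q a)⟩
    set μ' : X × (Fin K → V) → ℝ := joint pd q' with hμ'def
    have hμ' : ∀ ω, 0 ≤ μ' ω := fun ω => mul_nonneg (hpd.1 ω.1) ((hq' ω.1).1 ω.2)
    set Φ : Equiv.Perm (X × (Fin K → V)) :=
      Equiv.prodCongr (Equiv.refl X) (compEquiv σ) with hΦ
    -- the Bayes decoder for the swapped encoder
    set d' : (ℓ : ℕ) → (Fin ℓ → V) → X → ℝ := fun ℓ zc a =>
      if hℓ : ℓ ≤ K then bayesDec μ' Prod.fst (fun ω => trunc ℓ hℓ ω.2) zc a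
      else (Fintype.card X : ℝ)⁻¹ with hd'def
    have hd'pos : ∀ (ℓ : ℕ) (hℓ : ℓ ≤ K) (zc : Fin ℓ → V) (a : X),
        d' ℓ zc a = bayesDec μ' Prod.fst (fun ω => trunc ℓ hℓ ω.2) zc a :=
      fun ℓ hℓ zc a => dif_pos hℓ
    have hd' : IsDecoder K d' := by
      intro ℓ h1ℓ hℓK zc
      constructor
      · intro a
        rw [hd'pos ℓ hℓK]
        exact bayesDec_nonneg μ' hμ' _ _ _ _
      · simp only [hd'pos ℓ hℓK]
        exact bayesDec_sum μ' hμ' _ _ _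
    -- per-level bounds
    have hlow : ∀ j : Fin K,
        ((condEnt μ Prod.fst (fun ω => trunc (j.1 + 1) j.isLt ω.2) : ℝ) : EReal)
          ≤ ∑ a : X, ∑ v : Fin K → V, ((pd a * q a v : ℝ) : EReal)
              * negLog (d (j.1 + 1) (trunc (j.1 + 1) j.isLt v) a) := fun j =>
      inner_ge_condEnt μ hμ (j.1 + 1) j.isLt (d (j.1 + 1))
        (fun zc => hd (j.1 + 1) (by omega) j.isLt zc)
    have hup : ∀ j : Fin K,
        (∑ a : X, ∑ v : Fin K → V, ((pd a * q' a v : ℝ) : EReal)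
            * negLog (d' (j.1 + 1) (trunc (j.1 + 1) j.isLt v) a))
          = ((condEnt μ' Prod.fst (fun ω => trunc (j.1 + 1) j.isLt ω.2) : ℝ) : EReal) := by
      intro j
      have hrw : ∀ (zc : Fin (j.1 + 1) → V) (a : X), d' (j.1 + 1) zc a
          = bayesDec μ' Prod.fst (fun ω => trunc (j.1 + 1) j.isLt ω.2) zc a :=
        hd'pos (j.1 + 1) j.isLt
      simp only [hrw]
      exact inner_eq_bayes μ' hμ' (j.1 + 1) j.isLt
    -- objective comparison
    have hobj := hopt q' hq' d' hd'
    have hobj_up : objL K pd q' d'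
        = (((1 / (K : ℝ)) * ∑ j : Fin K,
            condEnt μ' Prod.fst (fun ω => trunc (j.1 + 1) j.isLt ω.2) : ℝ) : EReal) := by
      show ((1 / (K : ℝ) : ℝ) : EReal) * (∑ j : Fin K, ∑ a : X, ∑ v : Fin K → V,
          ((pd a * q' a v : ℝ) : EReal) * negLog (d' (j.1 + 1) (trunc (j.1 + 1) j.isLt v) a)) = _
      rw [Finset.sum_congr rfl (fun j _ => hup j), ← coe_sum, ← EReal.coe_mul]
    have hobj_low : (((1 / (K : ℝ)) * ∑ j : Fin K,
          condEnt μ Prod.fst (fun ω => trunc (j.1 + 1) j.isLt ω.2) : ℝ) : EReal)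
        ≤ objL K pd q d := by
      show _ ≤ ((1 / (K : ℝ) : ℝ) : EReal) * ∑ j : Fin K, ∑ a : X, ∑ v : Fin K → V,
          ((pd a * q a v : ℝ) : EReal) * negLog (d (j.1 + 1) (trunc (j.1 + 1) j.isLt v) a)
      rw [EReal.coe_mul, coe_sum]
      refine mul_le_mul_of_nonneg_left (Finset.sum_le_sum fun j _ => hlow j) ?_
      rw [← EReal.coe_zero, EReal.coe_le_coe_iff]
      positivity
    have hsum : (∑ j : Fin K, condEnt μ Prod.fst (fun ω => trunc (j.1 + 1) j.isLt ω.2))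
        ≤ ∑ j : Fin K, condEnt μ' Prod.fst (fun ω => trunc (j.1 + 1) j.isLt ω.2) := by
      have hc := le_trans hobj_low (le_trans hobj hobj_up.le)
      rw [EReal.coe_le_coe_iff] at hc
      have hKpos : (0 : ℝ) < 1 / (K : ℝ) := by
        have hK0 : (0 : ℝ) < (K : ℝ) := by exact_mod_cast (by omega : 0 < K)
        positivity
      exact le_of_mul_le_mul_left hc hKpos
    -- rewrite the swapped entropies through Φ
    have hbase : ∀ j : Fin K, condEnt μ' Prod.fst (fun ω => trunc (j.1 + 1) j.isLt ω.2)
        = condEnt μ Prod.fst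
            (fun ω => fun t : Fin (j.1 + 1) => ω.2 (σ (Fin.castLE j.isLt t))) := by
      intro j
      calc condEnt μ' Prod.fst (fun ω => trunc (j.1 + 1) j.isLt ω.2)
          = condEnt μ (fun ω => Prod.fst (Φ.symm ω))
              (fun ω => trunc (j.1 + 1) j.isLt ((Φ.symm ω).2)) :=
            condEnt_equiv μ Φ Prod.fst (fun ω => trunc (j.1 + 1) j.isLt ω.2)
        _ = condEnt μ Prod.fst
              (fun ω => fun t : Fin (j.1 + 1) => ω.2 (σ (Fin.castLE j.isLt t))) := by
            have hfun : (fun ω : X × (Fin K → V) => trunc (j.1 + 1) j.isLt ((Φ.symm ω).2))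
                = fun ω => fun t : Fin (j.1 + 1) => ω.2 (σ (Fin.castLE j.isLt t)) := by
              funext ω
              funext t
              show ω.2 (σ.symm (Fin.castLE j.isLt t)) = ω.2 (σ (Fin.castLE j.isLt t))
              rw [hσsymm]
            rw [hfun]
            rfl
    -- off-diagonal levels agree
    have hoff : ∀ j : Fin K, j ≠ (⟨i - 2, hi2K⟩ : Fin K) →
        condEnt μ' Prod.fst (fun ω => trunc (j.1 + 1) j.isLt ω.2)
          = condEnt μ Prod.fst (fun ω => trunc (j.1 + 1) j.isLt ω.2) := by
      intro j hj
      rw [hbase j]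
      have hjv : j.1 ≠ i - 2 := fun hc => hj (Fin.ext hc)
      rcases lt_or_gt_of_ne hjv with hlt | hgt
      · congr 1
        funext ω
        funext t
        show ω.2 (σ (Fin.castLE j.isLt t)) = ω.2 (Fin.castLE j.isLt t)
        refine congrArg ω.2 ?_
        rw [hσ]
        apply Equiv.swap_apply_of_ne_of_ne
        · intro hc
          have hc2 := congrArg Fin.val hc
          have ht := t.2
          have hmk : ((⟨i - 2, hi2K⟩ : Fin K) : ℕ) = i - 2 := rfl
          simp only [Fin.coe_castLE] at hc2
          omega
        · intro hc
          have hc2 := congrArg Fin.val hc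
          have ht := t.2
          have hmk : ((⟨i - 1, hi1K⟩ : Fin K) : ℕ) = i - 1 := rfl
          simp only [Fin.coe_castLE] at hc2
          omega
      · have hℓK : j.1 + 1 ≤ K := j.isLt
        have hτlt : ∀ t : Fin (j.1 + 1), (σ (Fin.castLE hℓK t)).1 < j.1 + 1 := by
          intro t
          have ht := t.2
          rw [hσ]
          by_cases hc1 : (Fin.castLE hℓK t) = (⟨i - 2, hi2K⟩ : Fin K)
          · rw [hc1, Equiv.swap_apply_left]
            show i - 1 < j.1 + 1
            omega
          · by_cases hc2 : (Fin.castLE hℓK t) = (⟨i - 1, hi1K⟩ : Fin K)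
            · rw [hc2, Equiv.swap_apply_right]
              show i - 2 < j.1 + 1
              omega
            · rw [Equiv.swap_apply_of_ne_of_ne hc1 hc2]
              show (Fin.castLE hℓK t).1 < j.1 + 1
              simp only [Fin.coe_castLE]
              exact ht
        set τ : Fin (j.1 + 1) → Fin (j.1 + 1) :=
          fun t => ⟨(σ (Fin.castLE hℓK t)).1, hτlt t⟩ with hτ
        have hcast : ∀ t : Fin (j.1 + 1), Fin.castLE hℓK (τ t) = σ (Fin.castLE hℓK t) :=
          fun t => Fin.ext rfl
        have hττ : ∀ t, τ (τ t) = t := by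
          intro t
          apply Fin.ext
          show (σ (Fin.castLE hℓK (τ t))).1 = t.1
          rw [hcast t, hσ, Equiv.swap_apply_self]
          simp only [Fin.coe_castLE]
        have hinj : Function.Injective (fun (w : Fin (j.1 + 1) → V) => w ∘ τ) := by
          intro w w' hw
          funext t
          have h5 := congrFun hw (τ t)
          simpa [Function.comp, hττ t] using h5
        have hfneq : (fun ω : X × (Fin K → V) =>
              fun t : Fin (j.1 + 1) => ω.2 (σ (Fin.castLE j.isLt t)))
            = fun ω => (fun w : Fin (j.1 + 1) → V => w ∘ τ) (trunc (j.1 + 1) hℓK ω.2) := by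
          funext ω
          funext t
          show ω.2 (σ (Fin.castLE hℓK t)) = ω.2 (Fin.castLE hℓK (τ t))
          exact congrArg ω.2 (hcast t).symm
        rw [hfneq]
        exact condEnt_comp_inj μ Prod.fst (fun ω => trunc (j.1 + 1) hℓK ω.2)
          (fun w => w ∘ τ) hinj
    -- the special level
    have hAeq : condEnt μ Prod.fst
          (fun ω => trunc ((⟨i - 2, hi2K⟩ : Fin K).1 + 1) (⟨i - 2, hi2K⟩ : Fin K).isLt ω.2)
        = condEnt μ Prod.fst (fun ω => (ω.2 ⟨i - 2, hi2K⟩, trunc (i - 2) h2le ω.2)) := by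
      have he' := snoc2_inj (V := V) (i - 2) (i - 2 + 1) (by omega)
      have hfe : (fun ω : X × (Fin K → V) =>
            trunc ((⟨i - 2, hi2K⟩ : Fin K).1 + 1) (⟨i - 2, hi2K⟩ : Fin K).isLt ω.2)
          = fun ω => snoc2 (i - 2) (i - 2 + 1) (by omega)
              ((fun ω' : X × (Fin K → V) =>
                (ω'.2 ⟨i - 2, hi2K⟩, trunc (i - 2) h2le ω'.2)) ω) := by
        funext ω
        funext t
        show ω.2 (Fin.castLE (⟨i - 2, hi2K⟩ : Fin K).isLt t) = snoc2 (i - 2) (i - 2 + 1) _ _ t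
        unfold snoc2
        by_cases hjt : t.1 < i - 2
        · rw [dif_pos hjt]
          rfl
        · rw [dif_neg hjt]
          have hval : (Fin.castLE (⟨i - 2, hi2K⟩ : Fin K).isLt t).1 = i - 2 := by
            have h4 := t.2
            have hmk : ((⟨i - 2, hi2K⟩ : Fin K) : ℕ) = i - 2 := rfl
            simp only [Fin.coe_castLE]
            omega
          exact congrArg ω.2 (Fin.ext hval)
      rw [hfe]
      exact condEnt_comp_inj μ Prod.fst _ _ he'
    have hBeq : condEnt μ' Prod.fst
          (fun ω => trunc ((⟨i - 2, hi2K⟩ : Fin K).1 + 1) (⟨i - 2, hi2K⟩ : Fin K).isLt ω.2)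
        = condEnt μ Prod.fst (fun ω => (ω.2 ⟨i - 1, hi1K⟩, trunc (i - 2) h2le ω.2)) := by
      rw [hbase ⟨i - 2, hi2K⟩]
      have he' := snoc2_inj (V := V) (i - 2) (i - 2 + 1) (by omega)
      have hfe : (fun ω : X × (Fin K → V) =>
            fun t : Fin ((⟨i - 2, hi2K⟩ : Fin K).1 + 1) =>
              ω.2 (σ (Fin.castLE (⟨i - 2, hi2K⟩ : Fin K).isLt t)))
          = fun ω => snoc2 (i - 2) (i - 2 + 1) (by omega)
              ((fun ω' : X × (Fin K → V) =>
                (ω'.2 ⟨i - 1, hi1K⟩, trunc (i - 2) h2le ω'.2)) ω) := by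
        funext ω
        funext t
        show ω.2 (σ (Fin.castLE (⟨i - 2, hi2K⟩ : Fin K).isLt t))
          = snoc2 (i - 2) (i - 2 + 1) _ _ t
        unfold snoc2
        by_cases hjt : t.1 < i - 2
        · rw [dif_pos hjt]
          have harg : σ (Fin.castLE (⟨i - 2, hi2K⟩ : Fin K).isLt t)
              = Fin.castLE h2le ⟨t.1, hjt⟩ := by
            rw [hσ]
            rw [Equiv.swap_apply_of_ne_of_ne]
            · exact Fin.ext (by simp only [Fin.coe_castLE])
            · intro hc
              have hc2 := congrArg Fin.val hc
              have hmk : ((⟨i - 2, hi2K⟩ : Fin K) : ℕ) = i - 2 := rfl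
              simp only [Fin.coe_castLE] at hc2
              omega
            · intro hc
              have hc2 := congrArg Fin.val hc
              have hmk : ((⟨i - 1, hi1K⟩ : Fin K) : ℕ) = i - 1 := rfl
              simp only [Fin.coe_castLE] at hc2
              omega
          exact congrArg ω.2 harg
        · rw [dif_neg hjt]
          have harg : σ (Fin.castLE (⟨i - 2, hi2K⟩ : Fin K).isLt t)
              = (⟨i - 1, hi1K⟩ : Fin K) := by
            have hc1 : (Fin.castLE (⟨i - 2, hi2K⟩ : Fin K).isLt t)
                = (⟨i - 2, hi2K⟩ : Fin K) := by
              apply Fin.ext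
              have h4 := t.2
              have hmk : ((⟨i - 2, hi2K⟩ : Fin K) : ℕ) = i - 2 := rfl
              simp only [Fin.coe_castLE]
              omega
            rw [hc1, hσ, Equiv.swap_apply_left]
          exact congrArg ω.2 harg
      rw [hfe]
      exact condEnt_comp_inj μ Prod.fst _ _ he'
    -- cancel the sums
    have hkey : condEnt μ Prod.fst
          (fun ω => trunc ((⟨i - 2, hi2K⟩ : Fin K).1 + 1) (⟨i - 2, hi2K⟩ : Fin K).isLt ω.2)
        ≤ condEnt μ' Prod.fst
          (fun ω => trunc ((⟨i - 2, hi2K⟩ : Fin K).1 + 1) (⟨i - 2, hi2K⟩ : Fin K).isLt ω.2) := by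
      have h1 := Finset.add_sum_erase Finset.univ
        (fun j : Fin K => condEnt μ Prod.fst (fun ω => trunc (j.1 + 1) j.isLt ω.2))
        (Finset.mem_univ (⟨i - 2, hi2K⟩ : Fin K))
      have h2 := Finset.add_sum_erase Finset.univ
        (fun j : Fin K => condEnt μ' Prod.fst (fun ω => trunc (j.1 + 1) j.isLt ω.2))
        (Finset.mem_univ (⟨i - 2, hi2K⟩ : Fin K))
      have h3 : ∑ j ∈ Finset.univ.erase (⟨i - 2, hi2K⟩ : Fin K),
            condEnt μ Prod.fst (fun ω => trunc (j.1 + 1) j.isLt ω.2)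
          = ∑ j ∈ Finset.univ.erase (⟨i - 2, hi2K⟩ : Fin K),
            condEnt μ' Prod.fst (fun ω => trunc (j.1 + 1) j.isLt ω.2) :=
        Finset.sum_congr rfl (fun j hj => (hoff j (Finset.mem_erase.1 hj).1).symm)
      linarith [hsum]
    calc condEnt μ Prod.fst (fun ω => (ω.2 ⟨i - 2, hi2K⟩, trunc (i - 2) h2le ω.2))
        = condEnt μ Prod.fst
            (fun ω => trunc ((⟨i - 2, hi2K⟩ : Fin K).1 + 1)
              (⟨i - 2, hi2K⟩ : Fin K).isLt ω.2) := hAeq.symm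
      _ ≤ condEnt μ' Prod.fst
            (fun ω => trunc ((⟨i - 2, hi2K⟩ : Fin K).1 + 1)
              (⟨i - 2, hi2K⟩ : Fin K).isLt ω.2) := hkey
      _ = condEnt μ Prod.fst
            (fun ω => (ω.2 ⟨i - 1, hi1K⟩, trunc (i - 2) h2le ω.2)) := hBeq

  -- Step A: pure information-theoretic assembly
  have he1 := snoc2_inj (V := V) (i - 2) (i - 1) (by omega)
  have hh1e : (fun ω : X × (Fin K → V) => trunc (i - 1) h1le ω.2)
      = fun ω => snoc2 (i - 2) (i - 1) (by omega)
          ((fun ω' : X × (Fin K → V) => (ω'.2 ⟨i - 2, hi2K⟩, trunc (i - 2) h2le ω'.2)) ω) := by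
    funext ω
    funext j
    show ω.2 (Fin.castLE h1le j) = snoc2 (i - 2) (i - 1) (by omega) _ j
    unfold snoc2
    by_cases hj : j.1 < i - 2
    · rw [dif_pos hj]
      rfl
    · rw [dif_neg hj]
      show ω.2 (Fin.castLE h1le j) = ω.2 ⟨i - 2, hi2K⟩
      have hval : (Fin.castLE h1le j).1 = i - 2 := by
        have h4 := j.2
        simp only [Fin.coe_castLE]
        omega
      exact congrArg ω.2 (Fin.ext hval)
  have hcmi0 : cmi μ (fun ω => ω.2 ⟨i - 2, hi2K⟩) (fun ω => ω.2 ⟨i - 1, hi1K⟩)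
      (fun ω => (ω.1, trunc (i - 2) h2le ω.2)) = 0 :=
    cmi_eq_zero_of_condIndep μ hμ _ _ _ (hci i h3 hiK)
  have hA1 : condEnt μ (fun ω => ω.2 ⟨i - 1, hi1K⟩) (fun ω => (ω.1, trunc (i - 2) h2le ω.2))
      - condEnt μ (fun ω => ω.2 ⟨i - 1, hi1K⟩)
          (fun ω => (ω.2 ⟨i - 2, hi2K⟩, (ω.1, trunc (i - 2) h2le ω.2))) = 0 := by
    rw [← cmi_eq' μ hμ (fun ω => ω.2 ⟨i - 2, hi2K⟩) (fun ω => ω.2 ⟨i - 1, hi1K⟩)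
      (fun ω => (ω.1, trunc (i - 2) h2le ω.2))]
    exact hcmi0
  have hA2 : 0 ≤ condEnt μ (fun ω => ω.2 ⟨i - 1, hi1K⟩) (fun ω => trunc (i - 2) h2le ω.2)
      - condEnt μ (fun ω => ω.2 ⟨i - 1, hi1K⟩)
          (fun ω => (ω.2 ⟨i - 2, hi2K⟩, trunc (i - 2) h2le ω.2)) := by
    rw [← cmi_eq' μ hμ (fun ω => ω.2 ⟨i - 2, hi2K⟩) (fun ω => ω.2 ⟨i - 1, hi1K⟩)
      (fun ω => trunc (i - 2) h2le ω.2)]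
    exact cmi_nonneg μ hμ _ _ _
  have hreassoc : condEnt μ (fun ω => ω.2 ⟨i - 1, hi1K⟩)
        (fun ω => (ω.1, (ω.2 ⟨i - 2, hi2K⟩, trunc (i - 2) h2le ω.2)))
      = condEnt μ (fun ω => ω.2 ⟨i - 1, hi1K⟩)
        (fun ω => (ω.2 ⟨i - 2, hi2K⟩, (ω.1, trunc (i - 2) h2le ω.2))) :=
    condEnt_comp_inj μ _ (fun ω => (ω.2 ⟨i - 2, hi2K⟩, (ω.1, trunc (i - 2) h2le ω.2)))
      (fun p => (p.2.1, (p.1, p.2.2)))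
      (fun p p' hp => by
        obtain ⟨a, b, c⟩ := p
        obtain ⟨a', b', c'⟩ := p'
        simp only [Prod.ext_iff] at hp ⊢
        tauto)
  have main : cmi μ (fun ω => ω.2 ⟨i - 1, hi1K⟩) Prod.fst (fun ω => trunc (i - 1) h1le ω.2)
      ≤ cmi μ (fun ω => ω.2 ⟨i - 2, hi2K⟩) Prod.fst (fun ω => trunc (i - 2) h2le ω.2) := by
    rw [hh1e, cmi_comp_inj μ hμ (fun ω => ω.2 ⟨i - 1, hi1K⟩) Prod.fst
      (fun ω' => (ω'.2 ⟨i - 2, hi2K⟩, trunc (i - 2) h2le ω'.2))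
      (snoc2 (i - 2) (i - 1) (by omega)) he1]
    rw [cmi_eq μ hμ (fun ω => ω.2 ⟨i - 1, hi1K⟩) Prod.fst
      (fun ω' => (ω'.2 ⟨i - 2, hi2K⟩, trunc (i - 2) h2le ω'.2))]
    rw [cmi_eq' μ hμ (fun ω => ω.2 ⟨i - 2, hi2K⟩) Prod.fst (fun ω => trunc (i - 2) h2le ω.2)]
    have hstep : condEnt μ (fun ω => ω.2 ⟨i - 1, hi1K⟩)
        (fun ω => (Prod.fst ω, (ω.2 ⟨i - 2, hi2K⟩, trunc (i - 2) h2le ω.2)))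
        = condEnt μ (fun ω => ω.2 ⟨i - 1, hi1K⟩) (fun ω => (ω.1, trunc (i - 2) h2le ω.2)) := by
      rw [hreassoc]
      linarith [hA1]
    rw [hstep]
    have hmid : condEnt μ (fun ω => ω.2 ⟨i - 1, hi1K⟩)
          (fun ω => (ω.2 ⟨i - 2, hi2K⟩, trunc (i - 2) h2le ω.2))
        - condEnt μ (fun ω => ω.2 ⟨i - 1, hi1K⟩) (fun ω => (ω.1, trunc (i - 2) h2le ω.2))
        ≤ condEnt μ (fun ω => ω.2 ⟨i - 1, hi1K⟩) (fun ω => trunc (i - 2) h2le ω.2)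
        - condEnt μ (fun ω => ω.2 ⟨i - 1, hi1K⟩) (fun ω => (ω.1, trunc (i - 2) h2le ω.2)) := by
      linarith [hA2]
    refine le_trans hmid ?_
    have heq3 : condEnt μ (fun ω => ω.2 ⟨i - 1, hi1K⟩) (fun ω => trunc (i - 2) h2le ω.2)
        - condEnt μ (fun ω => ω.2 ⟨i - 1, hi1K⟩) (fun ω => (ω.1, trunc (i - 2) h2le ω.2))
        = cmi μ (fun ω => ω.2 ⟨i - 1, hi1K⟩) Prod.fst (fun ω => trunc (i - 2) h2le ω.2) :=
      (cmi_eq μ hμ (fun ω => ω.2 ⟨i - 1, hi1K⟩) Prod.fst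
        (fun ω => trunc (i - 2) h2le ω.2)).symm
    rw [heq3, cmi_eq' μ hμ (fun ω => ω.2 ⟨i - 1, hi1K⟩) Prod.fst
      (fun ω => trunc (i - 2) h2le ω.2)]
    linarith [hEAEB]
  exact main
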